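/- Let A = ℂ[ℤ₂] be the group algebra of ℤ₂ over ℂ, with basis φ₀, φ₁ and χ(a) the trace of left multiplication by a. For β ∈ ℝ let z = (e^β/2)·φ₀ + (e^{−β}/2)·φ₁ ∈ A. Then for all g₁, g₂, g₃, g₄ ∈ ZMod 2, χ(z·φ_{g₁}·φ_{g₂}·φ_{g₃}·φ_{g₄}) = exp( β·(−1)^{g₁+g₂+g₃+g₄} ); i.e., this coloring reproduces the Boltzmann weight e^{−β tr(g₁g₂g₃g₄)} of ℤ₂ lattice gauge theory. -/

import Mathlib

/-!
STATEMENT 18: In the group algebra A = ℂ[ℤ₂] with basis φ₀, φ₁, the coloring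
z = (e^β/2)·φ₀ + (e^{−β}/2)·φ₁ reproduces the Boltzmann weight:
χ(z·φ_{g₁}·φ_{g₂}·φ_{g₃}·φ_{g₄}) = exp(β·(−1)^{g₁+g₂+g₃+g₄}).
-/

noncomputable section

/-- The group algebra ℂ[ℤ₂]. -/
abbrev GA : Type := AddMonoidAlgebra ℂ (ZMod 2)

/-- The basis element φ_g of ℂ[ℤ₂]. -/
def phi (g : ZMod 2) : GA := AddMonoidAlgebra.single g 1

/-- The trace character χ(a) = trace of left multiplication by a. -/
def chiGA : GA →ₗ[ℂ] ℂ := (LinearMap.trace ℂ GA) ∘ₗ (LinearMap.mul ℂ GA)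

instance : Module.Finite ℂ GA := Module.Finite.of_basis (AddMonoidAlgebra.basis (ZMod 2) ℂ)

lemma phi_mul (a b : ZMod 2) : phi a * phi b = phi (a + b) := by
  simp [phi, AddMonoidAlgebra.single_mul_single]

lemma chi_phi0 : chiGA (phi 0) = 2 := by
  have h1 : phi 0 = (1 : GA) := rfl
  have h2 : (LinearMap.mul ℂ GA) 1 = LinearMap.id := by ext x; simp
  rw [chiGA, LinearMap.comp_apply, h1, h2, LinearMap.trace_id]
  rw [Module.finrank_eq_card_basis (AddMonoidAlgebra.basis (ZMod 2) ℂ)]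
  simp

lemma chi_phi1 : chiGA (phi 1) = 0 := by
  classical
  let b : Module.Basis (ZMod 2) ℂ GA := AddMonoidAlgebra.basis (ZMod 2) ℂ
  rw [chiGA, LinearMap.comp_apply,
    LinearMap.trace_eq_matrix_trace ℂ b]
  rw [Matrix.trace]
  have : ∀ i : ZMod 2,
      (LinearMap.toMatrix b b ((LinearMap.mul ℂ GA) (phi 1))) i i = 0 := by
    intro i
    rw [LinearMap.toMatrix_apply]
    have hb : b i = AddMonoidAlgebra.single i 1 := rfl
    rw [hb]
    have : (LinearMap.mul ℂ GA) (phi 1) (AddMonoidAlgebra.single i 1)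
        = AddMonoidAlgebra.single (1 + i) 1 := by
      simp [phi, AddMonoidAlgebra.single_mul_single, LinearMap.mul_apply']
    rw [this]
    have : b.repr (AddMonoidAlgebra.single (1 + i) 1) = Finsupp.single (1 + i) 1 := by
      rfl
    rw [this, Finsupp.single_apply]
    have : 1 + i ≠ i := by
      intro h
      have := add_right_cancel (b := i) (a := (1 : ZMod 2)) (c := 0) (by simpa using h)
      exact one_ne_zero this
    simp [this]
  simp [Matrix.diag, this]

theorem gauge_boltzmann_weight (β : ℝ) (g₁ g₂ g₃ g₄ : ZMod 2) :
    chiGA ((((Real.exp β : ℂ) / 2) • phi 0 + ((Real.exp (-β) : ℂ) / 2) • phi 1) *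
        phi g₁ * phi g₂ * phi g₃ * phi g₄) =
      Complex.exp ((β : ℂ) * (-1 : ℂ) ^ (g₁ + g₂ + g₃ + g₄).val) := by
  have key : ∀ s : ZMod 2,
      chiGA ((((Real.exp β : ℂ) / 2) • phi 0 + ((Real.exp (-β) : ℂ) / 2) • phi 1) * phi s)
        = Complex.exp ((β : ℂ) * (-1 : ℂ) ^ s.val) := by
    intro s
    rw [add_mul, smul_mul_assoc, smul_mul_assoc, phi_mul, phi_mul, zero_add]
    have hs : s = 0 ∨ s = 1 := by fin_cases s; exacts [Or.inl rfl, Or.inr rfl]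
    rcases hs with rfl | rfl
    · rw [show ((1:ZMod 2)+0) = 1 from rfl]
      simp only [map_add, map_smul, chi_phi0, chi_phi1]
      rw [show (0:ZMod 2).val = 0 from rfl]
      simp [Complex.ofReal_exp]
    · rw [show ((1:ZMod 2)+1) = 0 from rfl]
      simp only [map_add, map_smul, chi_phi0, chi_phi1]
      rw [show (1:ZMod 2).val = 1 from rfl]
      simp [Complex.ofReal_exp]
  have hprod : (((Real.exp β : ℂ) / 2) • phi 0 + ((Real.exp (-β) : ℂ) / 2) • phi 1) *
        phi g₁ * phi g₂ * phi g₃ * phi g₄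
      = (((Real.exp β : ℂ) / 2) • phi 0 + ((Real.exp (-β) : ℂ) / 2) • phi 1) *
        phi (g₁ + g₂ + g₃ + g₄) := by
    rw [mul_assoc, mul_assoc, mul_assoc, phi_mul, phi_mul, phi_mul]
    ring_nf
  rw [hprod, key]


end
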